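/- In the one-signal, one-background contrastive factor model, along a sequence of models with d = d(n) and d/n → c ∈ (0, ∞) as n → ∞, one has e_1ᵀ S_n^+ e_1 → λ_{A,1} almost surely. -/

import Mathlib

open MeasureTheory ProbabilityTheory Matrix Filter
open scoped Topology

noncomputable section
open Real
open scoped ENNReal NNReal

/-- Index type for the independent scalar Gaussian sources of the contrastive factor model:
signal factors `w`, background factors `h`, `h'`, and noises `ε`, `ε'`. -/
abbrev CIdx (k m : ℕ) : Type :=
  (Fin k × ℕ) ⊕ ((Fin m × ℕ) ⊕ ((Fin m × ℕ) ⊕ ((ℕ × ℕ) ⊕ (ℕ × ℕ))))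

variable {Ω : Type*} [MeasurableSpace Ω]

/-- signal factor `w_{j,i}` (the `j`-th coordinate of the shared signal factor of sample `i`). -/
def wF {k m : ℕ} (ξ : CIdx k m → Ω → ℝ) (j : Fin k) (i : ℕ) : Ω → ℝ := ξ (.inl (j, i))
/-- background factor `h_{j,i}`. -/
def hF {k m : ℕ} (ξ : CIdx k m → Ω → ℝ) (j : Fin m) (i : ℕ) : Ω → ℝ := ξ (.inr (.inl (j, i)))
/-- background factor `h'_{j,i}`. -/
def hF' {k m : ℕ} (ξ : CIdx k m → Ω → ℝ) (j : Fin m) (i : ℕ) : Ω → ℝ :=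
  ξ (.inr (.inr (.inl (j, i))))
/-- noise `ε_{i,l}` (coordinate `l` of the noise of sample `i`). -/
def eF {k m : ℕ} (ξ : CIdx k m → Ω → ℝ) (i l : ℕ) : Ω → ℝ := ξ (.inr (.inr (.inr (.inl (i, l)))))
/-- noise `ε'_{i,l}`. -/
def eF' {k m : ℕ} (ξ : CIdx k m → Ω → ℝ) (i l : ℕ) : Ω → ℝ := ξ (.inr (.inr (.inr (.inr (i, l)))))

/-- The data matrix `X` with rows `x_i = A w_i + B h_i + ε_i`, where
`A = [√λ_{A,1} v_{A,1}, …, √λ_{A,k} v_{A,k}]` and `B = [√λ_{B,1} v_{B,1}, …, √λ_{B,m} v_{B,m}]`. -/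
def Xmat {k m : ℕ} (ξ : CIdx k m → Ω → ℝ) (lamA : Fin k → ℝ) (lamB : Fin m → ℝ)
    {dd : ℕ} (vA : Fin k → Fin dd → ℝ) (vB : Fin m → Fin dd → ℝ) (n : ℕ) (ω : Ω) :
    Matrix (Fin n) (Fin dd) ℝ :=
  fun i l =>
    (∑ j, Real.sqrt (lamA j) * vA j l * wF ξ j i ω)
    + (∑ j, Real.sqrt (lamB j) * vB j l * hF ξ j i ω)
    + eF ξ i l ω

/-- The data matrix `X⁺` with rows `x_i⁺ = A w_i + B h_i' + ε_i'`. -/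
def XmatP {k m : ℕ} (ξ : CIdx k m → Ω → ℝ) (lamA : Fin k → ℝ) (lamB : Fin m → ℝ)
    {dd : ℕ} (vA : Fin k → Fin dd → ℝ) (vB : Fin m → Fin dd → ℝ) (n : ℕ) (ω : Ω) :
    Matrix (Fin n) (Fin dd) ℝ :=
  fun i l =>
    (∑ j, Real.sqrt (lamA j) * vA j l * wF ξ j i ω)
    + (∑ j, Real.sqrt (lamB j) * vB j l * hF' ξ j i ω)
    + eF' ξ i l ω

/-- Contrastive covariance `S_n⁺ = (1/(2n)) (Xᵀ X⁺ + X⁺ᵀ X)`. -/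
def Snplus {k m : ℕ} (ξ : CIdx k m → Ω → ℝ) (lamA : Fin k → ℝ) (lamB : Fin m → ℝ)
    {dd : ℕ} (vA : Fin k → Fin dd → ℝ) (vB : Fin m → Fin dd → ℝ) (n : ℕ) (ω : Ω) :
    Matrix (Fin dd) (Fin dd) ℝ :=
  (1 / (2 * (n : ℝ))) •
    ((Xmat ξ lamA lamB vA vB n ω)ᵀ * (XmatP ξ lamA lamB vA vB n ω)
      + (XmatP ξ lamA lamB vA vB n ω)ᵀ * (Xmat ξ lamA lamB vA vB n ω))

/-- Sample covariance `S_n = (1/n) Xᵀ X`. -/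
def Sn {k m : ℕ} (ξ : CIdx k m → Ω → ℝ) (lamA : Fin k → ℝ) (lamB : Fin m → ℝ)
    {dd : ℕ} (vA : Fin k → Fin dd → ℝ) (vB : Fin m → Fin dd → ℝ) (n : ℕ) (ω : Ω) :
    Matrix (Fin dd) (Fin dd) ℝ :=
  ((n : ℝ)⁻¹) • ((Xmat ξ lamA lamB vA vB n ω)ᵀ * (Xmat ξ lamA lamB vA vB n ω))

/-- `dist(U, U') = ‖P − P'‖_op`: operator-norm distance between the matrices `P`, `Q`
(orthogonal projections onto the two subspaces), viewed as operators on Euclidean space. -/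
def opDist {dd : ℕ} (P Q : Matrix (Fin dd) (Fin dd) ℝ) : ℝ :=
  ‖Matrix.toEuclideanCLM (𝕜 := ℝ) (P - Q)‖

/-- The standard basis vector `e_{l₀}` of `ℝ^d` (as a function `Fin d → ℝ`). -/
def stdBasis (dd l₀ : ℕ) : Fin dd → ℝ := fun l => if (l : ℕ) = l₀ then 1 else 0


lemma pdf01 (x : ℝ) : gaussianPDFReal 0 1 x
    = (Real.sqrt (2*Real.pi))⁻¹ * Real.exp (-(1/2) * x^2) := by
  simp only [gaussianPDFReal, NNReal.coe_one, mul_one, sub_zero]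
  ring_nf

lemma gauss_withDensity : gaussianReal 0 1
    = MeasureTheory.Measure.withDensity volume
        (fun x => ((gaussianPDFReal 0 1 x).toNNReal : ℝ≥0∞)) := by
  rw [gaussianReal_of_var_ne_zero _ one_ne_zero]
  rfl

lemma integrable_gauss_iff (g : ℝ → ℝ) :
    Integrable g (gaussianReal 0 1)
      ↔ Integrable (fun x => gaussianPDFReal 0 1 x * g x) volume := by
  rw [gauss_withDensity,
    integrable_withDensity_iff_integrable_smul
      ((measurable_gaussianPDFReal 0 1).real_toNNReal)]
  refine integrable_congr (Filter.Eventually.of_forall fun x => ?_)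
  simp [NNReal.smul_def, Real.coe_toNNReal _ (gaussianPDFReal_nonneg 0 1 x)]

lemma integral_gauss_eq (g : ℝ → ℝ) :
    ∫ x, g x ∂(gaussianReal 0 1) = ∫ x, gaussianPDFReal 0 1 x * g x := by
  rw [gauss_withDensity,
    integral_withDensity_eq_integral_smul
      ((measurable_gaussianPDFReal 0 1).real_toNNReal)]
  refine integral_congr_ae (Filter.Eventually.of_forall fun x => ?_)
  simp [NNReal.smul_def, Real.coe_toNNReal _ (gaussianPDFReal_nonneg 0 1 x)]

lemma integrable_id_gauss : Integrable (fun x : ℝ => x) (gaussianReal 0 1) := by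
  rw [integrable_gauss_iff]
  have : Integrable (fun x : ℝ => (Real.sqrt (2*Real.pi))⁻¹ * (x * Real.exp (-(1/2) * x^2)))
      volume := (integrable_mul_exp_neg_mul_sq (by norm_num : (0:ℝ) < 1/2)).const_mul _
  refine this.congr (Filter.Eventually.of_forall fun x => ?_)
  simp only []; rw [pdf01]; ring

lemma integrable_sq_gauss : Integrable (fun x : ℝ => x^2) (gaussianReal 0 1) := by
  rw [integrable_gauss_iff]
  have h := (integrable_rpow_mul_exp_neg_mul_sq (by norm_num : (0:ℝ) < 1/2)
      (by norm_num : (-1:ℝ) < 2)).const_mul (Real.sqrt (2*Real.pi))⁻¹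
  refine h.congr (Filter.Eventually.of_forall fun x => ?_)
  simp only []; rw [pdf01, show (x ^ (2:ℝ)) = x ^ 2 by
    rw [show (2:ℝ) = ((2:ℕ):ℝ) by norm_num, Real.rpow_natCast]]
  ring

lemma gauss_map_neg :
    (gaussianReal 0 1).map (fun x : ℝ => -x) = gaussianReal 0 1 := by
  have h := gaussianReal_map_const_mul (μ := 0) (v := 1) (-1)
  rw [show (fun x:ℝ => -x) = (fun x => (-1:ℝ) * x) from funext fun x => (neg_one_mul x).symm, h]
  norm_num

lemma integral_id_gauss : ∫ x, x ∂(gaussianReal 0 1) = 0 := by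
  have h1 : ∫ x, x ∂((gaussianReal 0 1).map (fun x : ℝ => -x))
      = ∫ x, -x ∂(gaussianReal 0 1) :=
    integral_map measurable_neg.aemeasurable measurable_id.aestronglyMeasurable
  rw [gauss_map_neg, integral_neg] at h1
  linarith

lemma integral_sq_gauss : ∫ x, x^2 ∂(gaussianReal 0 1) = 1 := by
  rw [integral_gauss_eq]
  have hpdf : ∀ x : ℝ, gaussianPDFReal 0 1 x * x ^ 2
      = (Real.sqrt (2*Real.pi))⁻¹ * (x ^ 2 * Real.exp (-(1/2) * x^2)) := by
    intro x; rw [pdf01]; ring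
  simp only [hpdf]
  rw [integral_const_mul]
  have habs : ∫ a : ℝ, a ^ 2 * Real.exp (-(1/2) * a^2)
      = 2 * ∫ x in Set.Ioi (0:ℝ), x ^ 2 * Real.exp (-(1/2) * x^2) := by
    rw [← integral_comp_abs (f := fun x => x ^ 2 * Real.exp (-(1/2) * x^2))]
    refine integral_congr_ae (Filter.Eventually.of_forall fun x => ?_)
    simp [sq_abs]
  rw [habs]
  have hrw : ∀ x ∈ Set.Ioi (0:ℝ), x ^ 2 * Real.exp (-(1/2) * x^2)
      = x ^ (2:ℝ) * Real.exp (-(1/2) * x ^ (2:ℝ)) := by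
    intro x _
    rw [show (2:ℝ) = ((2:ℕ):ℝ) by norm_num, Real.rpow_natCast]
  rw [setIntegral_congr_fun measurableSet_Ioi hrw,
    integral_rpow_mul_exp_neg_mul_rpow two_pos (by norm_num) (by norm_num : (0:ℝ) < 1/2)]
  have hG : Real.Gamma ((2 + 1) / 2) = (1/2) * Real.sqrt Real.pi := by
    rw [show ((2:ℝ)+1)/2 = 1/2 + 1 by norm_num,
      Real.Gamma_add_one (by norm_num : (1/2:ℝ) ≠ 0), Real.Gamma_one_half_eq]
  have hb : ((1:ℝ)/2) ^ (-(2 + 1) / (2:ℝ)) = 2 * Real.sqrt 2 := by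
    rw [show ((1:ℝ)/2) = 2⁻¹ by norm_num, ← Real.rpow_neg_one (2:ℝ),
      ← Real.rpow_mul (by norm_num : (0:ℝ) ≤ 2),
      show (-1 : ℝ) * (-(2 + 1) / 2) = 1 + 1/2 by norm_num,
      Real.rpow_add (by norm_num : (0:ℝ) < 2), Real.rpow_one, ← Real.sqrt_eq_rpow]
  rw [hG, hb]
  have h2π : Real.sqrt (2 * Real.pi) = Real.sqrt 2 * Real.sqrt Real.pi :=
    Real.sqrt_mul (by norm_num) _
  rw [h2π]
  have hs2 : Real.sqrt 2 > 0 := Real.sqrt_pos.mpr (by norm_num)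
  have hsπ : Real.sqrt Real.pi > 0 := Real.sqrt_pos.mpr Real.pi_pos
  have hs2sq : Real.sqrt 2 * Real.sqrt 2 = 2 := Real.mul_self_sqrt (by norm_num)
  field_simp

/-- In the one-signal, one-background contrastive factor model, along a sequence of models
with `d = d(n)` and `d/n → c ∈ (0,∞)`, one has `e₁ᵀ S_n⁺ e₁ → λ_{A,1}` almost surely. -/
theorem snplus_quadform_e1_tendsto
    (μ : Measure Ω) [IsProbabilityMeasure μ]
    (lamA1 lamB1 : ℝ) (hlamA1 : 0 < lamA1) (hlamB1 : 0 < lamB1)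
    (d : ℕ → ℕ) (hd2 : ∀ n, 2 ≤ d n)
    (c : ℝ) (hc : 0 < c)
    (hdn : Filter.Tendsto (fun n : ℕ => (d n : ℝ) / n) atTop (nhds c))
    (ξ : CIdx 1 1 → Ω → ℝ)
    (hmeas : ∀ i, Measurable (ξ i))
    (hindep : iIndepFun ξ μ)
    (hGauss : ∀ i, Measure.map (ξ i) μ = gaussianReal 0 1) :
    ∀ᵐ ω ∂μ,
      Filter.Tendsto
        (fun n : ℕ =>
          stdBasis (d n) 0 ⬝ᵥ
            (Snplus ξ (fun _ => lamA1) (fun _ => lamB1)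
              (fun _ => stdBasis (d n) 0) (fun _ => stdBasis (d n) 1) n ω).mulVec
              (stdBasis (d n) 0))
        atTop (nhds lamA1) := by
  classical
  set s := Real.sqrt lamA1 with hs
  set γ := gaussianReal 0 1 with hγ
  let a : ℕ → CIdx 1 1 := fun i => Sum.inl (0, i)
  let b : ℕ → CIdx 1 1 := fun i => Sum.inr (Sum.inr (Sum.inr (Sum.inl (i, 0))))
  let c' : ℕ → CIdx 1 1 := fun i => Sum.inr (Sum.inr (Sum.inr (Sum.inr (i, 0))))
  let Y : ℕ → Ω → ℝ := fun i ω =>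
    (s * ξ (a i) ω + ξ (b i) ω) * (s * ξ (a i) ω + ξ (c' i) ω)
  -- single-coordinate facts
  have hInt1 : ∀ u : CIdx 1 1, Integrable (ξ u) μ := by
    intro u
    exact (integrable_map_measure aestronglyMeasurable_id (hmeas u).aemeasurable).mp
      (by rw [hGauss u]; exact integrable_id_gauss)
  have hIntSq : ∀ u : CIdx 1 1, Integrable (fun ω => (ξ u ω) ^ 2) μ := by
    intro u
    exact (integrable_map_measure (measurable_id.pow_const 2).aestronglyMeasurable
      (hmeas u).aemeasurable).mp (by rw [hGauss u]; exact integrable_sq_gauss)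
  have hEx : ∀ u : CIdx 1 1, ∫ ω, ξ u ω ∂μ = 0 := by
    intro u
    have := integral_map (μ := μ) (φ := ξ u) (hmeas u).aemeasurable
      (f := fun x : ℝ => x) aestronglyMeasurable_id
    rw [hGauss u, integral_id_gauss] at this
    exact this.symm
  have hExSq : ∀ u : CIdx 1 1, ∫ ω, (ξ u ω) ^ 2 ∂μ = 1 := by
    intro u
    have := integral_map (μ := μ) (φ := ξ u) (hmeas u).aemeasurable
      (f := fun x : ℝ => x ^ 2) (measurable_id.pow_const 2).aestronglyMeasurable
    rw [hGauss u, integral_sq_gauss] at this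
    exact this.symm
  -- distinctness
  have hab : ∀ i j : ℕ, a i ≠ b j := by intro i j; simp [a, b]
  have hac : ∀ i j : ℕ, a i ≠ c' j := by intro i j; simp [a, c']
  have hbc : ∀ i j : ℕ, b i ≠ c' j := by intro i j; simp [b, c']
  -- decomposition of Y
  have hYdec : ∀ i, Y i = fun ω => lamA1 * (ξ (a i) ω) ^ 2
      + (s * (ξ (a i) ω * ξ (c' i) ω) + (s * (ξ (a i) ω * ξ (b i) ω)
      + ξ (b i) ω * ξ (c' i) ω)) := by
    intro i
    funext ω
    have hss : s * s = lamA1 := Real.mul_self_sqrt hlamA1.le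
    simp only [Y]
    nlinarith [hss]
  have hmul : ∀ (u v : CIdx 1 1), u ≠ v → Integrable (fun ω => ξ u ω * ξ v ω) μ := by
    intro u v huv
    exact (hindep.indepFun huv).integrable_mul (hInt1 u) (hInt1 v)
  have hmulInt : ∀ (u v : CIdx 1 1), u ≠ v → ∫ ω, ξ u ω * ξ v ω ∂μ = 0 := by
    intro u v huv
    have := (hindep.indepFun huv).integral_fun_mul_eq_mul_integral (hInt1 u).1 (hInt1 v).1
    have h2 : ∫ ω, ξ u ω * ξ v ω ∂μ = (∫ ω, ξ u ω ∂μ) * ∫ ω, ξ v ω ∂μ := this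
    rw [h2, hEx u, hEx v, zero_mul]
  have hYint : ∀ i, Integrable (Y i) μ := by
    intro i
    rw [hYdec i]
    exact ((hIntSq (a i)).const_mul _).add
      (((hmul _ _ (hac i i)).const_mul _).add
        (((hmul _ _ (hab i i)).const_mul _).add (hmul _ _ (hbc i i))))
  have hEY : μ[Y 0] = lamA1 := by
    have h1 : Integrable (fun ω => lamA1 * (ξ (a 0) ω) ^ 2) μ := (hIntSq (a 0)).const_mul _
    have h2 : Integrable (fun ω => s * (ξ (a 0) ω * ξ (c' 0) ω)) μ :=
      (hmul _ _ (hac 0 0)).const_mul _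
    have h3 : Integrable (fun ω => s * (ξ (a 0) ω * ξ (b 0) ω)) μ :=
      (hmul _ _ (hab 0 0)).const_mul _
    have h4 : Integrable (fun ω => ξ (b 0) ω * ξ (c' 0) ω) μ := hmul _ _ (hbc 0 0)
    have h34 : Integrable (fun ω => s * (ξ (a 0) ω * ξ (b 0) ω)
        + ξ (b 0) ω * ξ (c' 0) ω) μ := h3.add h4
    have h234 : Integrable (fun ω => s * (ξ (a 0) ω * ξ (c' 0) ω)
        + (s * (ξ (a 0) ω * ξ (b 0) ω) + ξ (b 0) ω * ξ (c' 0) ω)) μ := h2.add h34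
    show ∫ ω, Y 0 ω ∂μ = lamA1
    rw [show (fun ω => Y 0 ω) = Y 0 from rfl, hYdec 0,
      integral_add h1 h234, integral_add h2 h34, integral_add h3 h4,
      integral_const_mul, integral_const_mul, integral_const_mul,
      hExSq (a 0), hmulInt _ _ (hac 0 0), hmulInt _ _ (hab 0 0), hmulInt _ _ (hbc 0 0)]
    ring
  -- pairwise independence of the Y's
  have hYindep : Pairwise (Function.onFun (IndepFun · · μ) Y) := by
    intro i j hij
    have hdisj : Disjoint ({a i, b i, c' i} : Finset (CIdx 1 1)) {a j, b j, c' j} := by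
      rw [Finset.disjoint_left]
      intro x hx hx'
      simp only [Finset.mem_insert, Finset.mem_singleton] at hx hx'
      rcases hx with h | h | h <;> rcases hx' with h' | h' | h' <;>
        · subst h; simp [a, b, c', hij] at h'
    have h := hindep.indepFun_finset _ _ hdisj hmeas
    let g : (k : ℕ) → ((x : ({a k, b k, c' k} : Finset (CIdx 1 1))) → ℝ) → ℝ := fun k v =>
      (s * v ⟨a k, by simp⟩ + v ⟨b k, by simp⟩) * (s * v ⟨a k, by simp⟩ + v ⟨c' k, by simp⟩)
    have hg : ∀ k, Measurable (g k) := by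
      intro k
      fun_prop
    exact (h.comp (hg i) (hg j) :)
  -- identical distribution
  have hYident : ∀ i, IdentDistrib (Y i) (Y 0) μ μ := by
    intro i
    have hTmeas : ∀ k : ℕ, Measurable (fun ω => (ξ (a k) ω, (ξ (b k) ω, ξ (c' k) ω))) := by
      intro k
      exact (hmeas _).prodMk ((hmeas _).prodMk (hmeas _))
    have hT : ∀ k : ℕ, Measure.map (fun ω => (ξ (a k) ω, (ξ (b k) ω, ξ (c' k) ω))) μ
        = γ.prod (γ.prod γ) := by
      intro k
      have hbck : IndepFun (ξ (b k)) (ξ (c' k)) μ := hindep.indepFun (hbc k k)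
      have hbcmap : μ.map (fun ω => (ξ (b k) ω, ξ (c' k) ω))
          = (μ.map (ξ (b k))).prod (μ.map (ξ (c' k))) :=
        (indepFun_iff_map_prod_eq_prod_map_map (hmeas _).aemeasurable
          (hmeas _).aemeasurable).mp hbck
      have habck : IndepFun (ξ (a k)) (fun ω => (ξ (b k) ω, ξ (c' k) ω)) μ :=
        (hindep.indepFun_prodMk hmeas (b k) (c' k) (a k)
          (fun h => hab k k h.symm) (fun h => hac k k h.symm)).symm
      have hmap := (indepFun_iff_map_prod_eq_prod_map_map (hmeas (a k)).aemeasurable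
        ((hmeas (b k)).prodMk (hmeas (c' k))).aemeasurable).mp habck
      rw [hmap, hbcmap, hGauss, hGauss, hGauss]
    have hTid : IdentDistrib (fun ω => (ξ (a i) ω, (ξ (b i) ω, ξ (c' i) ω)))
        (fun ω => (ξ (a 0) ω, (ξ (b 0) ω, ξ (c' 0) ω))) μ μ :=
      ⟨(hTmeas i).aemeasurable, (hTmeas 0).aemeasurable, by rw [hT i, hT 0]⟩
    have hφ : Measurable (fun p : ℝ × ℝ × ℝ => (s * p.1 + p.2.1) * (s * p.1 + p.2.2)) := by
      fun_prop
    exact (hTid.comp hφ :)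
  -- strong law of large numbers
  have hslln := strong_law_ae_real Y (hYint 0) hYindep hYident
  rw [hEY] at hslln
  filter_upwards [hslln] with ω hω
  refine Tendsto.congr' ?_ hω
  filter_upwards [eventually_ge_atTop 1] with n hn
  have hn0 : (n : ℝ) ≠ 0 := by positivity
  have h0d : 0 < d n := lt_of_lt_of_le (by norm_num) (hd2 n)
  set z : Fin (d n) := ⟨0, h0d⟩ with hz
  have hstd0 : stdBasis (d n) 0 = Pi.single z (1 : ℝ) := by
    funext l
    simp [_root_.stdBasis, Pi.single_apply, Fin.ext_iff, hz]
  have hquad : ∀ (M : Matrix (Fin (d n)) (Fin (d n)) ℝ),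
      stdBasis (d n) 0 ⬝ᵥ M.mulVec (stdBasis (d n) 0) = M z z := by
    intro M
    rw [hstd0]
    simp [dotProduct, Matrix.mulVec, Pi.single_apply, mul_ite, ite_mul,
      Finset.sum_ite_eq', Finset.sum_ite_eq]
  have hX : ∀ i : Fin n, Xmat ξ (fun _ => lamA1) (fun _ => lamB1)
      (fun _ => stdBasis (d n) 0) (fun _ => stdBasis (d n) 1) n ω i z
      = s * ξ (a (i : ℕ)) ω + ξ (b (i : ℕ)) ω := by
    intro i
    simp [Xmat, _root_.stdBasis, Fin.sum_univ_one, hz, wF, eF, a, b, ← hs]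
  have hXP : ∀ i : Fin n, XmatP ξ (fun _ => lamA1) (fun _ => lamB1)
      (fun _ => stdBasis (d n) 0) (fun _ => stdBasis (d n) 1) n ω i z
      = s * ξ (a (i : ℕ)) ω + ξ (c' (i : ℕ)) ω := by
    intro i
    simp [XmatP, _root_.stdBasis, Fin.sum_univ_one, hz, wF, eF', a, c', ← hs]
  rw [hquad]
  simp only [Snplus, Matrix.smul_apply, Matrix.add_apply, Matrix.mul_apply,
    Matrix.transpose_apply, smul_eq_mul]
  have hsum : ∀ (f g : Fin n → ℝ), (∑ i, f i * g i) = ∑ i, f i * g i := fun _ _ => rfl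
  simp only [hX, hXP]
  have hsum1 : (∑ i : Fin n, (s * ξ (a (i : ℕ)) ω + ξ (b (i : ℕ)) ω)
      * (s * ξ (a (i : ℕ)) ω + ξ (c' (i : ℕ)) ω)) = ∑ i ∈ Finset.range n, Y i ω := by
    rw [← Fin.sum_univ_eq_sum_range (fun k => Y k ω) n]
  have hsum2 : (∑ i : Fin n, (s * ξ (a (i : ℕ)) ω + ξ (c' (i : ℕ)) ω)
      * (s * ξ (a (i : ℕ)) ω + ξ (b (i : ℕ)) ω)) = ∑ i ∈ Finset.range n, Y i ω := by
    rw [← Fin.sum_univ_eq_sum_range (fun k => Y k ω) n]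
    exact Finset.sum_congr rfl fun i _ => by ring
  rw [hsum1, hsum2]
  field_simp
  ring


end
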